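/- A single vertex insertion can force Ω(n) changes in any DFS tree: for every n ≥ 2, let G_n be the tree (spider) with vertex set {r} ∪ {a_1, …, a_n} ∪ {b_1, …, b_n} and edges {r, a_i} and {a_i, b_i} for 1 ≤ i ≤ n, so that G_n is its own unique spanning tree T_n and T_n is a DFS tree of G_n rooted at r. Let G_n' be obtained from G_n by inserting a single new vertex u adjacent to b_1, …, b_n. Then every DFS tree T' of G_n' rooted at r contains at most one of the n edges {r, a_i}; consequently, T' omits at least n − 1 edges of T_n. -/

import Mathlib

/-- `u` is an ancestor of `v` in the tree `T` rooted at `r`: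
`u` lies on the (unique) path in `T` from `r` to `v`. -/
def IsAncestor {V : Type*} (T : SimpleGraph V) (r u v : V) : Prop :=
  ∀ p : T.Walk r v, p.IsPath → u ∈ p.support

/-- The vertex set of the spider with center `r`, middle vertices `a 1, …, a n`, leaves
`b 1, …, b n`, together with the new vertex `u`. -/
abbrev SpiderV (n : ℕ) := Sum Unit (Sum (Fin n) (Sum (Fin n) Unit))

/-- The root `r`. -/
def rv (n : ℕ) : SpiderV n := Sum.inl ()

/-- The middle vertex `a i`. -/
def av (n : ℕ) (i : Fin n) : SpiderV n := Sum.inr (Sum.inl i)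

/-- The leaf `b i`. -/
def bv (n : ℕ) (i : Fin n) : SpiderV n := Sum.inr (Sum.inr (Sum.inl i))

/-- The newly inserted vertex `u`. -/
def uv (n : ℕ) : SpiderV n := Sum.inr (Sum.inr (Sum.inr ()))

/-- `G_n'`: the spider `G_n` with edges `{r, a i}` and `{a i, b i}` for `1 ≤ i ≤ n`, after
inserting the single new vertex `u` adjacent to `b 1, …, b n`. -/
def SpiderG' (n : ℕ) : SimpleGraph (SpiderV n) :=
  SimpleGraph.fromRel (fun x y =>
    (∃ i : Fin n, x = rv n ∧ y = av n i) ∨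
    (∃ i : Fin n, x = av n i ∧ y = bv n i) ∨
    (∃ i : Fin n, x = bv n i ∧ y = uv n))

open SimpleGraph

lemma adj_av_aux {n : ℕ} {i : Fin n} {w : SpiderV n} (h : (SpiderG' n).Adj (av n i) w) :
    w = rv n ∨ w = bv n i := by
  rw [SpiderG', SimpleGraph.fromRel_adj] at h
  obtain ⟨-, h⟩ := h
  rcases h with (⟨j, h1, h2⟩ | ⟨j, h1, h2⟩ | ⟨j, h1, h2⟩) |
    (⟨j, h1, h2⟩ | ⟨j, h1, h2⟩ | ⟨j, h1, h2⟩) <;> simp_all [rv, av, bv, uv]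

lemma spider_adj_ab {n : ℕ} (i : Fin n) : (SpiderG' n).Adj (av n i) (bv n i) := by
  rw [SpiderG', SimpleGraph.fromRel_adj]
  exact ⟨by simp [av, bv], Or.inl (Or.inr (Or.inl ⟨i, rfl, rfl⟩))⟩

lemma spider_adj_bu {n : ℕ} (i : Fin n) : (SpiderG' n).Adj (bv n i) (uv n) := by
  rw [SpiderG', SimpleGraph.fromRel_adj]
  exact ⟨by simp [bv, uv], Or.inl (Or.inr (Or.inr ⟨i, rfl, rfl⟩))⟩

lemma dr_struct {n : ℕ} {T' : SimpleGraph (SpiderV n)} (hle : T' ≤ SpiderG' n)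
    (i : Fin n) (D : T'.Walk (av n i) (bv n i)) (hD : D.IsPath)
    (hne : rv n ∉ D.support.tail) :
    ∃ e : T'.Adj (av n i) (bv n i), D = Walk.cons e Walk.nil := by
  cases D with
  | cons e dr' =>
    rcases adj_av_aux (hle e) with hw | hw
    · exfalso
      subst hw
      exact hne (by simp [dr'.start_mem_support])
    · subst hw
      have : dr'.IsPath := hD.of_cons
      rw [Walk.isPath_iff_eq_nil] at this
      exact ⟨e, by rw [this]⟩

lemma spider_key {n : ℕ}
    (T' : SimpleGraph (SpiderV n)) (hle : T' ≤ SpiderG' n) (htree : T'.IsTree)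
    (hdfs : ∀ x y : SpiderV n, (SpiderG' n).Adj x y →
      IsAncestor T' (rv n) x y ∨ IsAncestor T' (rv n) y x)
    (Pu : T'.Walk (rv n) (uv n)) (hPu : Pu.IsPath)
    (i : Fin n) (h : T'.Adj (rv n) (av n i)) :
    ∃ l, Pu.support = rv n :: av n i :: l := by
  -- the singleton path r → a i
  have hsing : (Walk.cons h Walk.nil).IsPath := (Path.singleton h).property
  -- a i is an ancestor of b i
  have ha_anc : IsAncestor T' (rv n) (av n i) (bv n i) := by
    rcases hdfs _ _ (spider_adj_ab i) with h' | h'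
    · exact h'
    · exfalso
      have := h' (Walk.cons h Walk.nil) hsing
      rw [Walk.support_cons, Walk.support_nil] at this
      simp [rv, av, bv] at this
  -- the unique path from r to b i
  obtain ⟨Pb, hPb, huniqb⟩ := htree.existsUnique_path (rv n) (bv n i)
  have haPb : av n i ∈ Pb.support := ha_anc Pb hPb
  have htk : Pb.takeUntil (av n i) haPb = Walk.cons h Walk.nil :=
    (htree.existsUnique_path (rv n) (av n i)).unique (hPb.takeUntil haPb)
      hsing
  have hspec := Pb.take_spec haPb
  have hPb2 : Pb = (Walk.cons h Walk.nil).append (Pb.dropUntil (av n i) haPb) := by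
    rw [← htk]; exact hspec.symm
  have hnodup := hPb.support_nodup
  rw [hPb2, Walk.support_append] at hnodup
  simp only [Walk.support_cons, Walk.support_nil, List.cons_append, List.nil_append,
    List.nodup_cons] at hnodup
  have hne : rv n ∉ (Pb.dropUntil (av n i) haPb).support.tail := fun hmem =>
    hnodup.1 (List.mem_cons.mpr (Or.inr hmem))
  obtain ⟨e, hdre⟩ := dr_struct hle i _ (hPb.dropUntil haPb) hne
  have hPbsupp : Pb.support = [rv n, av n i, bv n i] := by
    rw [hPb2, hdre, Walk.support_append]
    simp
  -- b i is an ancestor of u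
  have hb_anc : IsAncestor T' (rv n) (bv n i) (uv n) := by
    rcases hdfs _ _ (spider_adj_bu i) with h' | h'
    · exact h'
    · exfalso
      have := h' Pb hPb
      rw [hPbsupp] at this
      simp [rv, av, bv, uv] at this
  have hbPu : bv n i ∈ Pu.support := hb_anc Pu hPu
  have htk2 : Pu.takeUntil (bv n i) hbPu = Pb :=
    (htree.existsUnique_path (rv n) (bv n i)).unique (hPu.takeUntil hbPu) hPb
  have hspec2 := Pu.take_spec hbPu
  have hsupp := congrArg SimpleGraph.Walk.support hspec2
  rw [Walk.support_append, htk2, hPbsupp] at hsupp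
  refine ⟨bv n i :: (Pu.dropUntil (bv n i) hbPu).support.tail, ?_⟩
  rw [← hsupp]
  simp

theorem spider_insertion_forces_changes (n : ℕ) (hn : 2 ≤ n)
    (T' : SimpleGraph (SpiderV n)) (hle : T' ≤ SpiderG' n) (htree : T'.IsTree)
    (hdfs : ∀ x y : SpiderV n, (SpiderG' n).Adj x y →
      IsAncestor T' (rv n) x y ∨ IsAncestor T' (rv n) y x) :
    {i : Fin n | T'.Adj (rv n) (av n i)}.ncard ≤ 1 ∧
    n - 1 ≤ {i : Fin n | ¬ T'.Adj (rv n) (av n i)}.ncard := by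
  obtain ⟨Pu, hPu, -⟩ := htree.existsUnique_path (rv n) (uv n)
  have hsub : ∀ i ∈ {i : Fin n | T'.Adj (rv n) (av n i)},
      ∀ j ∈ {i : Fin n | T'.Adj (rv n) (av n i)}, i = j := by
    intro i hi j hj
    obtain ⟨l, hl⟩ := spider_key T' hle htree hdfs Pu hPu i hi
    obtain ⟨l', hl'⟩ := spider_key T' hle htree hdfs Pu hPu j hj
    rw [hl] at hl'
    have : av n i = av n j := by injection hl' with _ h2; injection h2
    simpa [av] using this
  have h1 : {i : Fin n | T'.Adj (rv n) (av n i)}.ncard ≤ 1 :=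
    (Set.ncard_le_one (Set.toFinite _)).mpr hsub
  refine ⟨h1, ?_⟩
  have hc := Set.ncard_add_ncard_compl {i : Fin n | T'.Adj (rv n) (av n i)}
    (Set.toFinite _) (Set.toFinite _)
  rw [Nat.card_eq_fintype_card, Fintype.card_fin] at hc
  have : {i : Fin n | T'.Adj (rv n) (av n i)}ᶜ = {i : Fin n | ¬ T'.Adj (rv n) (av n i)} := by
    ext i; simp
  rw [this] at hc
  omega
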